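/- arXiv:2005.11690 — 4 statements merged into one kernel-verified Lean document; each statement's English description precedes it below -/
import Mathlib

section
/- The multiplication map V_1 ⊗ V_2 → H^0(O_R(1)) is an isomorphism, where R ∈ |O_{P^1×P^2}(2,1)| is smooth irreducible, V_1 = p_1|_R^* H^0(O_{P^1}(1)) and V_2 = p_2|_R^* H^0(O_{P^2}(1)). Consequently the restriction map H^0(O_{P^1×P^2}(1,1)) → H^0(O_R(1,1)) is an isomorphism. -/
/-!
STATEMENT 6: Let R ∈ |O_{ℙ¹×ℙ²}(2,1)| be smooth irreducible.  The
multiplication map V₁ ⊗ V₂ → H⁰(O_R(1)) is an isomorphism, where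
V₁ = p₁|_R* H⁰(O_{ℙ¹}(1)) and V₂ = p₂|_R* H⁰(O_{ℙ²}(1)).  Consequently the
restriction map H⁰(O_{ℙ¹×ℙ²}(1,1)) → H⁰(O_R(1,1)) is an isomorphism.

Formalization: sections of O_{ℙ¹×ℙ²}(a,b) are bihomogeneous forms of bidegree
(a,b); since R is projectively normal in the Segre embedding and
h⁰(O_R(1,1)) = 6, the space H⁰(O_R(1,1)) of sections of O_R(1) is the
bidegree-(1,1) part of the homogeneous coordinate ring A/(P) of R, i.e. the
image of the bidegree-(1,1) forms in A/(P).  The pullbacks V₁, V₂ are the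
images in A/(P) of the forms of bidegree (1,0) resp. (0,1); since P has
bidegree (2,1), restriction is injective in these degrees and we may compute
with the forms themselves.  The claims: the multiplication map
V₁ ⊗ V₂ → A/(P) is injective with image exactly H⁰(O_R(1,1)), and the
restriction map from bidegree-(1,1) forms to A/(P) is injective with the same
image.
-/

open MvPolynomial LinearAlgebra.Projectivization TensorProduct

abbrev VarP1P2 := Fin 2 ⊕ Fin 3

def bidegWt : VarP1P2 → ℕ × ℕ := Sum.elim (fun _ => (1, 0)) (fun _ => (0, 1))

def IsSmoothBihom (P : MvPolynomial VarP1P2 ℂ) : Prop :=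
  ∀ (z : Fin 2 → ℂ) (x : Fin 3 → ℂ), z ≠ 0 → x ≠ 0 →
    eval (Sum.elim z x) P = 0 → ∃ i, eval (Sum.elim z x) (pderiv i P) ≠ 0

/-- The space of bihomogeneous forms of bidegree `(a,b)`,
`H⁰(O_{ℙ¹×ℙ²}(a,b))`. -/
noncomputable abbrev bihomForms (a b : ℕ) : Submodule ℂ (MvPolynomial VarP1P2 ℂ) :=
  weightedHomogeneousSubmodule ℂ bidegWt (a, b)

/-- Restriction to `R = {P = 0}`: the quotient map to the homogeneous
coordinate ring `A/(P)` of `R`, as a `ℂ`-linear map. -/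
noncomputable def restr (P : MvPolynomial VarP1P2 ℂ) :
    MvPolynomial VarP1P2 ℂ →ₗ[ℂ] (MvPolynomial VarP1P2 ℂ ⧸ Ideal.span {P}) :=
  (Ideal.Quotient.mkₐ ℂ (Ideal.span {P})).toLinearMap

/-- `H⁰(O_R(1)) = H⁰(O_R(1,1))`: the bidegree-(1,1) part of the homogeneous
coordinate ring of `R`. -/
noncomputable def sectionsOR1 (P : MvPolynomial VarP1P2 ℂ) :
    Submodule ℂ (MvPolynomial VarP1P2 ℂ ⧸ Ideal.span {P}) :=
  Submodule.map (restr P) (bihomForms 1 1)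

/-- The multiplication map `V₁ ⊗ V₂ → A/(P)`,
`f ⊗ g ↦ (f·g)|_R`. -/
noncomputable def mulRestr (P : MvPolynomial VarP1P2 ℂ) :
    (bihomForms 1 0 ⊗[ℂ] bihomForms 0 1) →ₗ[ℂ]
      (MvPolynomial VarP1P2 ℂ ⧸ Ideal.span {P}) :=
  TensorProduct.lift
    (LinearMap.mk₂ ℂ (fun f g => restr P (f.1 * g.1))
      (fun f f' g => by simp [add_mul])
      (fun c f g => by simp [smul_mul_assoc])
      (fun f g g' => by simp [mul_add])
      (fun c f g => by simp [mul_smul_comm]))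

/-! ### Auxiliary material -/

lemma weight_eq (d : VarP1P2 →₀ ℕ) :
    Finsupp.weight bidegWt d =
      (d (.inl 0) + d (.inl 1), d (.inr 0) + d (.inr 1) + d (.inr 2)) := by
  rw [Finsupp.weight_apply, Finsupp.sum_fintype _ _ (by intro i; simp)]
  simp [Fintype.sum_sum_type, Fin.sum_univ_two, Fin.sum_univ_three, bidegWt, Prod.ext_iff,
    Prod.smul_mk]

lemma wt_single_inl (i : Fin 2) :
    Finsupp.weight bidegWt (Finsupp.single (.inl i) 1) = (1, 0) := by
  rw [weight_eq]; fin_cases i <;> simp [Finsupp.single_apply]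

lemma wt_single_inr (j : Fin 3) :
    Finsupp.weight bidegWt (Finsupp.single (.inr j) 1) = (0, 1) := by
  rw [weight_eq]; fin_cases j <;> simp [Finsupp.single_apply]

noncomputable def bidx (p : Fin 2 × Fin 3) : VarP1P2 →₀ ℕ :=
  Finsupp.single (.inl p.1) 1 + Finsupp.single (.inr p.2) 1

lemma wt_bidx (p : Fin 2 × Fin 3) : Finsupp.weight bidegWt (bidx p) = (1, 1) := by
  rw [bidx, map_add, wt_single_inl, wt_single_inr]; rfl

lemma bidx_inj : Function.Injective bidx := by
  rintro ⟨i, j⟩ ⟨i', j'⟩ h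
  simp only [bidx, Finsupp.ext_iff, Finsupp.add_apply, Finsupp.single_apply] at h
  have h1 := h (.inl i)
  have h2 := h (.inr j)
  simp at h1 h2
  refine Prod.ext ?_ ?_
  · by_contra hne
    exact hne h1.symm
  · by_contra hne
    exact hne h2.symm

lemma classify10 (d : VarP1P2 →₀ ℕ) (h : Finsupp.weight bidegWt d = (1, 0)) :
    ∃ i : Fin 2, d = Finsupp.single (.inl i) 1 := by
  rw [weight_eq, Prod.mk.injEq] at h
  obtain ⟨h1, h2⟩ := h
  rcases Nat.add_eq_one_iff.mp h1 with ⟨ha, hb⟩ | ⟨ha, hb⟩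
  · refine ⟨1, ?_⟩
    ext v
    rcases v with j | j <;> fin_cases j <;> simp [Finsupp.single_apply, ha, hb] <;> omega
  · refine ⟨0, ?_⟩
    ext v
    rcases v with j | j <;> fin_cases j <;> simp [Finsupp.single_apply, ha, hb] <;> omega

lemma classify01 (d : VarP1P2 →₀ ℕ) (h : Finsupp.weight bidegWt d = (0, 1)) :
    ∃ j : Fin 3, d = Finsupp.single (.inr j) 1 := by
  rw [weight_eq, Prod.mk.injEq] at h
  obtain ⟨h1, h2⟩ := h
  have : d (.inr 0) = 1 ∧ d (.inr 1) = 0 ∧ d (.inr 2) = 0 ∨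
      d (.inr 0) = 0 ∧ d (.inr 1) = 1 ∧ d (.inr 2) = 0 ∨
      d (.inr 0) = 0 ∧ d (.inr 1) = 0 ∧ d (.inr 2) = 1 := by omega
  rcases this with ⟨a,b,c⟩ | ⟨a,b,c⟩ | ⟨a,b,c⟩
  · exact ⟨0, by ext v; rcases v with j | j <;> fin_cases j <;>
      simp [Finsupp.single_apply, a, b, c] <;> omega⟩
  · exact ⟨1, by ext v; rcases v with j | j <;> fin_cases j <;>
      simp [Finsupp.single_apply, a, b, c] <;> omega⟩
  · exact ⟨2, by ext v; rcases v with j | j <;> fin_cases j <;>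
      simp [Finsupp.single_apply, a, b, c] <;> omega⟩

lemma classify11 (d : VarP1P2 →₀ ℕ) (h : Finsupp.weight bidegWt d = (1, 1)) :
    ∃ p : Fin 2 × Fin 3, d = bidx p := by
  rw [weight_eq, Prod.mk.injEq] at h
  obtain ⟨h1, h2⟩ := h
  have hz : d (.inl 0) = 1 ∧ d (.inl 1) = 0 ∨ d (.inl 0) = 0 ∧ d (.inl 1) = 1 := by omega
  have hx : d (.inr 0) = 1 ∧ d (.inr 1) = 0 ∧ d (.inr 2) = 0 ∨
      d (.inr 0) = 0 ∧ d (.inr 1) = 1 ∧ d (.inr 2) = 0 ∨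
      d (.inr 0) = 0 ∧ d (.inr 1) = 0 ∧ d (.inr 2) = 1 := by omega
  rcases hz with ⟨a, b⟩ | ⟨a, b⟩ <;>
    rcases hx with ⟨c, e, f⟩ | ⟨c, e, f⟩ | ⟨c, e, f⟩
  · exact ⟨(0, 0), by ext v; rcases v with k | k <;> fin_cases k <;>
      simp [bidx, Finsupp.single_apply, a, b, c, e, f]⟩
  · exact ⟨(0, 1), by ext v; rcases v with k | k <;> fin_cases k <;>
      simp [bidx, Finsupp.single_apply, a, b, c, e, f]⟩
  · exact ⟨(0, 2), by ext v; rcases v with k | k <;> fin_cases k <;>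
      simp [bidx, Finsupp.single_apply, a, b, c, e, f]⟩
  · exact ⟨(1, 0), by ext v; rcases v with k | k <;> fin_cases k <;>
      simp [bidx, Finsupp.single_apply, a, b, c, e, f]⟩
  · exact ⟨(1, 1), by ext v; rcases v with k | k <;> fin_cases k <;>
      simp [bidx, Finsupp.single_apply, a, b, c, e, f]⟩
  · exact ⟨(1, 2), by ext v; rcases v with k | k <;> fin_cases k <;>
      simp [bidx, Finsupp.single_apply, a, b, c, e, f]⟩

lemma memX1 (i : Fin 2) : (X (.inl i) : MvPolynomial VarP1P2 ℂ) ∈ bihomForms 1 0 := by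
  have := isWeightedHomogeneous_X ℂ bidegWt (Sum.inl i : VarP1P2)
  simpa [bidegWt] using this

lemma memX2 (j : Fin 3) : (X (.inr j) : MvPolynomial VarP1P2 ℂ) ∈ bihomForms 0 1 := by
  have := isWeightedHomogeneous_X ℂ bidegWt (Sum.inr j : VarP1P2)
  simpa [bidegWt] using this

lemma memXX (p : Fin 2 × Fin 3) :
    (X (.inl p.1) * X (.inr p.2) : MvPolynomial VarP1P2 ℂ) ∈ bihomForms 1 1 := by
  have := IsWeightedHomogeneous.mul (memX1 p.1) (memX2 p.2)
  simpa using this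

lemma XX_eq (p : Fin 2 × Fin 3) :
    (X (.inl p.1) * X (.inr p.2) : MvPolynomial VarP1P2 ℂ) = monomial (bidx p) 1 := by
  rw [X, X, monomial_mul, one_mul, bidx]

/-! ### Decompositions -/

lemma decomp10 {f : MvPolynomial VarP1P2 ℂ} (hf : f ∈ bihomForms 1 0) :
    f = ∑ i : Fin 2, coeff (Finsupp.single (.inl i) 1) f • X (.inl i) := by
  apply MvPolynomial.ext
  intro d
  rw [coeff_sum]
  simp only [coeff_smul, coeff_X', smul_eq_mul]
  by_cases h : Finsupp.weight bidegWt d = (1, 0)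
  · obtain ⟨i, rfl⟩ := classify10 d h
    rw [Finset.sum_eq_single i]
    · simp
    · intro i' _ hne
      rw [if_neg, mul_zero]
      simp only [Finsupp.single_left_inj one_ne_zero]
      exact fun hc => hne (by simpa using hc)
    · simp
  · have h0 : coeff d f = 0 := by by_contra hc; exact h (hf hc)
    rw [h0]
    symm
    apply Finset.sum_eq_zero
    intro i _
    rw [if_neg, mul_zero]
    intro hc
    exact h (hc ▸ wt_single_inl i)

lemma decomp01 {f : MvPolynomial VarP1P2 ℂ} (hf : f ∈ bihomForms 0 1) :
    f = ∑ j : Fin 3, coeff (Finsupp.single (.inr j) 1) f • X (.inr j) := by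
  apply MvPolynomial.ext
  intro d
  rw [coeff_sum]
  simp only [coeff_smul, coeff_X', smul_eq_mul]
  by_cases h : Finsupp.weight bidegWt d = (0, 1)
  · obtain ⟨j, rfl⟩ := classify01 d h
    rw [Finset.sum_eq_single j]
    · simp
    · intro j' _ hne
      rw [if_neg, mul_zero]
      simp only [Finsupp.single_left_inj one_ne_zero]
      exact fun hc => hne (by simpa using hc)
    · simp
  · have h0 : coeff d f = 0 := by by_contra hc; exact h (hf hc)
    rw [h0]
    symm
    apply Finset.sum_eq_zero
    intro j _
    rw [if_neg, mul_zero]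
    intro hc
    exact h (hc ▸ wt_single_inr j)

lemma decomp11 {f : MvPolynomial VarP1P2 ℂ} (hf : f ∈ bihomForms 1 1) :
    f = ∑ p : Fin 2 × Fin 3, coeff (bidx p) f • (monomial (bidx p) 1 : MvPolynomial VarP1P2 ℂ) := by
  apply MvPolynomial.ext
  intro d
  rw [coeff_sum]
  simp only [coeff_smul, coeff_monomial, smul_eq_mul]
  by_cases h : Finsupp.weight bidegWt d = (1, 1)
  · obtain ⟨p, rfl⟩ := classify11 d h
    rw [Finset.sum_eq_single p]
    · simp
    · intro q _ hne
      rw [if_neg (fun hc => hne (bidx_inj hc)), mul_zero]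
    · simp
  · have h0 : coeff d f = 0 := by by_contra hc; exact h (hf hc)
    rw [h0]
    symm
    apply Finset.sum_eq_zero
    intro p _
    rw [if_neg, mul_zero]
    intro hc
    exact h (hc ▸ wt_bidx p)

/-! ### Bases -/

lemma liX : LinearIndependent ℂ (fun d : VarP1P2 →₀ ℕ => (monomial d 1 : MvPolynomial VarP1P2 ℂ)) := by
  simpa [coe_basisMonomials] using (basisMonomials VarP1P2 ℂ).linearIndependent

lemma li1 : LinearIndependent ℂ
    (fun i : Fin 2 => (⟨X (.inl i), memX1 i⟩ : bihomForms 1 0)) := by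
  apply LinearIndependent.of_comp (bihomForms 1 0).subtype
  have h := liX.comp (fun i : Fin 2 => Finsupp.single (Sum.inl i : VarP1P2) 1)
    (fun i i' hii => by simpa using (Finsupp.single_left_inj one_ne_zero).mp hii)
  exact h

lemma sp1 : ⊤ ≤ Submodule.span ℂ
    (Set.range fun i : Fin 2 => (⟨X (.inl i), memX1 i⟩ : bihomForms 1 0)) := by
  rintro ⟨f, hf⟩ -
  have key : (⟨f, hf⟩ : bihomForms 1 0) =
      ∑ i : Fin 2, coeff (Finsupp.single (.inl i) 1) f • ⟨X (.inl i), memX1 i⟩ :=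
    Subtype.ext (by push_cast; exact decomp10 hf)
  rw [key]
  exact Submodule.sum_mem _ fun i _ =>
    Submodule.smul_mem _ _ (Submodule.subset_span ⟨i, rfl⟩)

noncomputable def b1 : Module.Basis (Fin 2) ℂ (bihomForms 1 0) := Module.Basis.mk li1 sp1

lemma li2 : LinearIndependent ℂ
    (fun j : Fin 3 => (⟨X (.inr j), memX2 j⟩ : bihomForms 0 1)) := by
  apply LinearIndependent.of_comp (bihomForms 0 1).subtype
  have h := liX.comp (fun j : Fin 3 => Finsupp.single (Sum.inr j : VarP1P2) 1)
    (fun j j' hjj => by simpa using (Finsupp.single_left_inj one_ne_zero).mp hjj)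
  exact h

lemma sp2 : ⊤ ≤ Submodule.span ℂ
    (Set.range fun j : Fin 3 => (⟨X (.inr j), memX2 j⟩ : bihomForms 0 1)) := by
  rintro ⟨f, hf⟩ -
  have key : (⟨f, hf⟩ : bihomForms 0 1) =
      ∑ j : Fin 3, coeff (Finsupp.single (.inr j) 1) f • ⟨X (.inr j), memX2 j⟩ :=
    Subtype.ext (by push_cast; exact decomp01 hf)
  rw [key]
  exact Submodule.sum_mem _ fun j _ =>
    Submodule.smul_mem _ _ (Submodule.subset_span ⟨j, rfl⟩)

noncomputable def b2 : Module.Basis (Fin 3) ℂ (bihomForms 0 1) := Module.Basis.mk li2 sp2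

lemma memM (p : Fin 2 × Fin 3) :
    (monomial (bidx p) 1 : MvPolynomial VarP1P2 ℂ) ∈ bihomForms 1 1 :=
  isWeightedHomogeneous_monomial bidegWt (bidx p) (1 : ℂ) (wt_bidx p)

lemma li11 : LinearIndependent ℂ
    (fun p : Fin 2 × Fin 3 => (⟨monomial (bidx p) 1, memM p⟩ : bihomForms 1 1)) := by
  apply LinearIndependent.of_comp (bihomForms 1 1).subtype
  exact liX.comp bidx bidx_inj

lemma sp11 : ⊤ ≤ Submodule.span ℂ
    (Set.range fun p : Fin 2 × Fin 3 =>
      (⟨monomial (bidx p) 1, memM p⟩ : bihomForms 1 1)) := by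
  rintro ⟨f, hf⟩ -
  have key : (⟨f, hf⟩ : bihomForms 1 1) =
      ∑ p : Fin 2 × Fin 3, coeff (bidx p) f • ⟨monomial (bidx p) 1, memM p⟩ :=
    Subtype.ext (by push_cast; exact decomp11 hf)
  rw [key]
  exact Submodule.sum_mem _ fun p _ =>
    Submodule.smul_mem _ _ (Submodule.subset_span ⟨p, rfl⟩)

noncomputable def b11 : Module.Basis (Fin 2 × Fin 3) ℂ (bihomForms 1 1) := Module.Basis.mk li11 sp11

/-! ### The kernel of restriction in low bidegree -/

lemma span_P_cap_11 {P : MvPolynomial VarP1P2 ℂ}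
    (hbihom : P.IsWeightedHomogeneous bidegWt (2, 1))
    {h : MvPolynomial VarP1P2 ℂ} (hh : h ∈ bihomForms 1 1)
    (hm : h ∈ Ideal.span {P}) : h = 0 := by
  by_contra hne
  obtain ⟨d, hd⟩ := MvPolynomial.ne_zero_iff.mp hne
  have hwd : Finsupp.weight bidegWt d = (1, 1) := hh hd
  obtain ⟨Q, hQ⟩ := Ideal.mem_span_singleton'.mp hm
  rw [← hQ, coeff_mul] at hd
  obtain ⟨⟨d1, d2⟩, hmem, hne'⟩ := Finset.exists_ne_zero_of_sum_ne_zero hd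
  have hd2 : coeff d2 P ≠ 0 := right_ne_zero_of_mul hne'
  have hP2 : Finsupp.weight bidegWt d2 = (2, 1) := hbihom hd2
  have hadd : d1 + d2 = d := Finset.HasAntidiagonal.mem_antidiagonal.mp hmem
  have := congrArg (Finsupp.weight bidegWt) hadd
  rw [map_add, hP2, hwd] at this
  have := congrArg Prod.fst this
  simp at this

lemma restr11_inj {P : MvPolynomial VarP1P2 ℂ}
    (hbihom : P.IsWeightedHomogeneous bidegWt (2, 1)) :
    Function.Injective ((restr P).comp (bihomForms 1 1).subtype) := by
  intro x y hxy
  have hmem : (x : MvPolynomial VarP1P2 ℂ) - y ∈ Ideal.span {P} := by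
    rw [← Ideal.Quotient.eq]
    simpa [restr] using hxy
  have := span_P_cap_11 hbihom (sub_mem x.2 y.2) hmem
  exact Subtype.ext (sub_eq_zero.mp this)

/-! ### The multiplication map into bidegree (1,1) -/

noncomputable def mulForms :
    (bihomForms 1 0 ⊗[ℂ] bihomForms 0 1) →ₗ[ℂ] bihomForms 1 1 :=
  TensorProduct.lift
    (LinearMap.mk₂ ℂ
      (fun f g => (⟨f.1 * g.1, IsWeightedHomogeneous.mul f.2 g.2⟩ : bihomForms 1 1))
      (fun f f' g => Subtype.ext (by simp [add_mul]))
      (fun c f g => Subtype.ext (by simp [smul_mul_assoc]))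
      (fun f g g' => Subtype.ext (by simp [mul_add]))
      (fun c f g => Subtype.ext (by simp [mul_smul_comm])))

lemma mulForms_eq :
    mulForms = ((b1.tensorProduct b2).equiv b11 (Equiv.refl _)).toLinearMap := by
  apply (b1.tensorProduct b2).ext
  rintro ⟨i, j⟩
  have hE : ((b1.tensorProduct b2).equiv b11 (Equiv.refl _))
      ((b1.tensorProduct b2) (i, j)) = b11 (i, j) := by
    rw [Module.Basis.equiv_apply]; rfl
  rw [LinearEquiv.coe_coe, hE, Module.Basis.tensorProduct_apply']
  simp only [b1, b2, b11, Module.Basis.mk_apply]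
  exact Subtype.ext (by simpa [mulForms] using XX_eq (i, j))

lemma mulForms_bij : Function.Bijective mulForms := by
  rw [mulForms_eq]
  exact ((b1.tensorProduct b2).equiv b11 (Equiv.refl _)).bijective

lemma mulRestr_eq (P : MvPolynomial VarP1P2 ℂ) :
    mulRestr P = ((restr P).comp (bihomForms 1 1).subtype).comp mulForms := by
  apply TensorProduct.ext'
  intro f g
  simp [mulRestr, mulForms, restr]


theorem multiplication_map_isomorphism (P : MvPolynomial VarP1P2 ℂ)
    (hbihom : P.IsWeightedHomogeneous bidegWt (2, 1)) (hirr : Irreducible P)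
    (hsm : IsSmoothBihom P) :
    -- V₁ ⊗ V₂ → H⁰(O_R(1)) is an isomorphism:
    Function.Injective (mulRestr P) ∧
    LinearMap.range (mulRestr P) = sectionsOR1 P ∧
    -- consequently H⁰(O_{ℙ¹×ℙ²}(1,1)) → H⁰(O_R(1,1)) is an isomorphism:
    Function.Injective ((restr P).comp (bihomForms 1 1).subtype) := by
  refine ⟨?_, ?_, restr11_inj hbihom⟩
  · rw [mulRestr_eq]
    exact ((restr11_inj hbihom).comp mulForms_bij.injective)
  · rw [mulRestr_eq, LinearMap.range_comp,
      LinearMap.range_eq_top.mpr mulForms_bij.surjective, Submodule.map_top,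
      LinearMap.range_comp, Submodule.range_subtype]
    rfl
end

section
/- Let R = P^1 × B ⊂ P^1 × P^2 with B a smooth conic, a smooth quartic scroll in P^5 under the Segre embedding. Then the image of H^0(I_R(3)) under the restriction map H^0(O_{P^5}(3)) → H^0(O_{P^1×P^2}(3,3)) equals F · H^0(O_{P^1×P^2}(3,1)), where F ∈ H^0(O_{P^1×P^2}(0,2)) is the defining equation of R. -/
/-!
STATEMENT 8: Let R = ℙ¹ × B ⊂ ℙ¹ × ℙ² with B a smooth conic, a smooth quartic
scroll in ℙ⁵ under the Segre embedding.  Then the image of H⁰(I_R(3)) under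
the restriction map π : H⁰(O_{ℙ⁵}(3)) → H⁰(O_{ℙ¹×ℙ²}(3,3)) equals
F · H⁰(O_{ℙ¹×ℙ²}(3,1)), where F ∈ H⁰(O_{ℙ¹×ℙ²}(0,2)) is the defining
equation of R.

Formalization: coordinates of ℙ⁵ are indexed by Fin 2 × Fin 3; the Segre
restriction π is the substitution w_{ij} ↦ Z_i·X_j.  H⁰(I_R(3)) is the space
of homogeneous cubics G on ℙ⁵ vanishing on R, i.e. such that π G vanishes
at every point of the affine cone of R.  F is the pullback of a smooth conic
Q ⊂ ℙ².  The claim is the set equality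
π(H⁰(I_R(3))) = F · {bihomogeneous forms of bidegree (3,1)}.
-/

open MvPolynomial

/-- Coordinates of ℙ⁵, indexed by pairs `(i,j)` via the Segre embedding. -/
abbrev VarP5 := Fin 2 × Fin 3

/-- The restriction map `π : H⁰(O_{ℙ⁵}(d)) → H⁰(O_{ℙ¹×ℙ²}(d,d))` of the Segre
embedding: substitute `w_{ij} ↦ Z_i · X_j`. -/
noncomputable def segreRestriction :
    MvPolynomial VarP5 ℂ →ₐ[ℂ] MvPolynomial VarP1P2 ℂ :=
  aeval (fun p => X (Sum.inl p.1) * X (Sum.inr p.2))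

section AuxiliaryLemmas

lemma exists_matrix_of_margins {ι κ : Type*} [Fintype ι] [Fintype κ]
    [DecidableEq ι] [DecidableEq κ] :
    ∀ (n : ℕ) (r : ι → ℕ) (c : κ → ℕ), (∑ i, r i) = n → (∑ k, c k) = n →
      ∃ M : ι → κ → ℕ, (∀ i, ∑ k, M i k = r i) ∧ (∀ k, ∑ i, M i k = c k) := by
  intro n
  induction n with
  | zero =>
    intro r c hr hc
    refine ⟨fun _ _ => 0, fun i => ?_, fun k => ?_⟩
    · have := Finset.sum_eq_zero_iff.mp hr i (Finset.mem_univ i)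
      simp [this]
    · have := Finset.sum_eq_zero_iff.mp hc k (Finset.mem_univ k)
      simp [this]
  | succ n ih =>
    intro r c hr hc
    have hi0 : ∃ i, r i ≠ 0 := by
      by_contra hcon
      push_neg at hcon
      simp [hcon] at hr
    have hk0 : ∃ k, c k ≠ 0 := by
      by_contra hcon
      push_neg at hcon
      simp [hcon] at hc
    obtain ⟨i0, hi0⟩ := hi0
    obtain ⟨k0, hk0⟩ := hk0
    have hr' : (∑ i, Function.update r i0 (r i0 - 1) i) = n := by
      rw [Finset.sum_update_of_mem (Finset.mem_univ i0), Finset.sdiff_singleton_eq_erase]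
      rw [← Finset.sum_erase_add _ _ (Finset.mem_univ i0)] at hr
      omega
    have hc' : (∑ k, Function.update c k0 (c k0 - 1) k) = n := by
      rw [Finset.sum_update_of_mem (Finset.mem_univ k0), Finset.sdiff_singleton_eq_erase]
      rw [← Finset.sum_erase_add _ _ (Finset.mem_univ k0)] at hc
      omega
    obtain ⟨M, hM1, hM2⟩ := ih _ _ hr' hc'
    refine ⟨fun i k => M i k + (if i = i0 then (if k = k0 then 1 else 0) else 0),
      fun i => ?_, fun k => ?_⟩
    · rw [Finset.sum_add_distrib, hM1]
      by_cases hi : i = i0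
      · subst hi
        simp [Finset.sum_ite_eq']
        omega
      · simp [hi, Function.update_of_ne hi]
    · rw [Finset.sum_add_distrib, hM2]
      by_cases hk : k = k0
      · subst hk
        simp [Finset.sum_ite_eq']
        omega
      · simp [hk, Function.update_of_ne hk]

lemma degree_eq_sum_univ {ι : Type*} [Fintype ι] (e : ι →₀ ℕ) :
    e.degree = ∑ i, e i :=
  Finset.sum_subset (Finset.subset_univ _)
    (fun x _ hx => Finsupp.notMem_support_iff.mp hx)

lemma weight_bidegWt (d : VarP1P2 →₀ ℕ) :
    Finsupp.weight bidegWt d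
      = (∑ i : Fin 2, d (Sum.inl i), ∑ j : Fin 3, d (Sum.inr j)) := by
  rw [Finsupp.weight_apply, Finsupp.sum_fintype _ _ (fun v => by simp)]
  rw [Fintype.sum_sum_type]
  apply Prod.ext
  · simp [bidegWt, Prod.fst_sum]
  · simp [bidegWt, Prod.snd_sum]

lemma segre_exists_monomial (d : VarP1P2 →₀ ℕ) (n : ℕ)
    (h1 : (∑ i : Fin 2, d (Sum.inl i)) = n) (h2 : (∑ j : Fin 3, d (Sum.inr j)) = n) :
    ∃ e : VarP5 →₀ ℕ, e.degree = n ∧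
      segreRestriction (monomial e 1) = monomial d 1 := by
  obtain ⟨M, hr, hc⟩ := exists_matrix_of_margins n
    (fun i => d (Sum.inl i)) (fun j => d (Sum.inr j)) h1 h2
  set e : VarP5 →₀ ℕ := Finsupp.equivFunOnFinite.symm (fun p => M p.1 p.2) with he
  have hee : ∀ p : VarP5, e p = M p.1 p.2 := fun p => rfl
  refine ⟨e, ?_, ?_⟩
  · rw [degree_eq_sum_univ]
    simp only [hee]
    rw [Fintype.sum_prod_type]
    simp [hr, h1]
  · rw [segreRestriction, aeval_monomial, map_one, one_mul,
      Finsupp.prod_fintype _ _ (fun p => pow_zero _)]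
    simp only [hee]
    rw [monomial_eq, map_one, one_mul, Finsupp.prod_fintype _ _ (fun v => pow_zero _),
      Fintype.prod_sum_type]
    simp only [mul_pow]
    rw [Finset.prod_mul_distrib, Fintype.prod_prod_type]
    congr 1
    · refine Finset.prod_congr rfl (fun i _ => ?_)
      show (∏ y : Fin 3, (X (Sum.inl i) : MvPolynomial VarP1P2 ℂ) ^ M i y) = _
      rw [Finset.prod_pow_eq_pow_sum, hr]
    · rw [Fintype.prod_prod_type, Finset.prod_comm]
      refine Finset.prod_congr rfl (fun j _ => ?_)
      show (∏ i : Fin 2, (X (Sum.inr j) : MvPolynomial VarP1P2 ℂ) ^ M i j) = _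
      rw [Finset.prod_pow_eq_pow_sum, hc]

lemma wh_pow {σ' : Type*} {M : Type*} [AddCommMonoid M] {w : σ' → M}
    {φ : MvPolynomial σ' ℂ} {m : M} (h : φ.IsWeightedHomogeneous w m) (k : ℕ) :
    (φ ^ k).IsWeightedHomogeneous w (k • m) := by
  induction k with
  | zero => simpa using isWeightedHomogeneous_one ℂ w
  | succ k ih =>
    rw [pow_succ, succ_nsmul]
    exact ih.mul h

lemma segre_isWeightedHomogeneous {n : ℕ} {G : MvPolynomial VarP5 ℂ}
    (hG : G.IsHomogeneous n) :
    (segreRestriction G).IsWeightedHomogeneous bidegWt (n, n) := by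
  conv_lhs => rw [← support_sum_monomial_coeff G]
  rw [map_sum]
  apply IsWeightedHomogeneous.sum
  intro e he
  have hdeg : e.degree = n := by
    rw [Finsupp.degree_eq_weight_one]
    exact hG (mem_support_iff.mp he)
  rw [segreRestriction, aeval_monomial, Finsupp.prod_fintype _ _ (fun p => pow_zero _)]
  have hprod : ((∏ p : VarP5, (X (Sum.inl p.1) * X (Sum.inr p.2)
        : MvPolynomial VarP1P2 ℂ) ^ e p)).IsWeightedHomogeneous bidegWt (n, n) := by
    have := IsWeightedHomogeneous.prod Finset.univ
      (fun p : VarP5 => (X (Sum.inl p.1) * X (Sum.inr p.2) : MvPolynomial VarP1P2 ℂ) ^ e p)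
      (fun p : VarP5 => e p • ((1, 1) : ℕ × ℕ)) (w := bidegWt)
      (fun p _ => wh_pow ((isWeightedHomogeneous_X ℂ bidegWt (Sum.inl p.1)).mul
        (isWeightedHomogeneous_X ℂ bidegWt (Sum.inr p.2))) (e p))
    have hsum : (∑ p : VarP5, e p • ((1, 1) : ℕ × ℕ)) = (n, n) := by
      apply Prod.ext
      · rw [Prod.fst_sum]
        simp [← hdeg, degree_eq_sum_univ]
      · rw [Prod.snd_sum]
        simp [← hdeg, degree_eq_sum_univ]
    rwa [hsum] at this
  have := (isWeightedHomogeneous_C bidegWt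
    (algebraMap ℂ ℂ (coeff e G) : ℂ)).mul hprod
  simpa using this

lemma segre_surj_onto_bihom {n : ℕ} {P : MvPolynomial VarP1P2 ℂ}
    (hP : P.IsWeightedHomogeneous bidegWt (n, n)) :
    ∃ G : MvPolynomial VarP5 ℂ, G.IsHomogeneous n ∧ segreRestriction G = P := by
  have key : ∀ d ∈ P.support, ∃ e : VarP5 →₀ ℕ, e.degree = n ∧
      segreRestriction (monomial e 1) = monomial d 1 := by
    intro d hd
    have hw := hP (mem_support_iff.mp hd)
    rw [weight_bidegWt] at hw
    exact segre_exists_monomial d n (congrArg Prod.fst hw) (congrArg Prod.snd hw)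
  choose! e he1 he2 using key
  refine ⟨∑ d ∈ P.support.attach, monomial (e d.1) (coeff d.1 P), ?_, ?_⟩
  · apply IsHomogeneous.sum
    intro d _
    exact isHomogeneous_monomial _ (he1 d.1 d.2)
  · rw [map_sum]
    have : ∀ d ∈ P.support.attach,
        segreRestriction (monomial (e d.1) (coeff d.1 P)) = monomial d.1 (coeff d.1 P) := by
      intro d _
      have h1 : (monomial (e d.1) (coeff d.1 P)) =
          C (coeff d.1 P) * monomial (e d.1) 1 := by
        rw [C_mul_monomial, mul_one]
      rw [h1, map_mul, he2 d.1 d.2]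
      simp [C_mul_monomial]
    rw [Finset.sum_congr rfl this]
    rw [Finset.sum_attach P.support (fun d => monomial d (coeff d P))]
    exact support_sum_monomial_coeff P

lemma wh_cancel {M : Type*} [AddCancelCommMonoid M] {σ' : Type*} {w : σ' → M}
    {F h : MvPolynomial σ' ℂ} {m n : M} (hF : F.IsWeightedHomogeneous w m)
    (hF0 : F ≠ 0) (hFh : (F * h).IsWeightedHomogeneous w (m + n)) :
    h.IsWeightedHomogeneous w n := by
  classical
  set S := (weightedHomogeneousComponent_finsupp (φ := h) (w := w)).toFinset with hS
  have hsum : (∑ d ∈ S, weightedHomogeneousComponent w d h) = h := by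
    rw [← finsum_eq_sum _ (weightedHomogeneousComponent_finsupp (φ := h) (w := w))]
    exact sum_weightedHomogeneousComponent w h
  have hzero : ∀ d ∈ S, d ≠ n → weightedHomogeneousComponent w d h = 0 := by
    intro d0 hd0 hne
    have h1 : weightedHomogeneousComponent w (m + d0) (F * h) = 0 :=
      hFh.weightedHomogeneousComponent_ne (m + d0) (fun hc => hne (add_left_cancel hc))
    have h2 : weightedHomogeneousComponent w (m + d0) (F * h)
        = F * weightedHomogeneousComponent w d0 h := by
      conv_lhs => rw [← hsum, Finset.mul_sum, map_sum]
      rw [Finset.sum_eq_single_of_mem d0 hd0]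
      · exact IsWeightedHomogeneous.weightedHomogeneousComponent_same
          (hF.mul (weightedHomogeneousComponent_isWeightedHomogeneous d0 h))
      · intro b _ hb
        exact IsWeightedHomogeneous.weightedHomogeneousComponent_ne _
          (hF.mul (weightedHomogeneousComponent_isWeightedHomogeneous b h))
          (fun hc => hb (add_left_cancel hc).symm)
    have h3 : F * weightedHomogeneousComponent w d0 h = 0 := h2.symm.trans h1
    exact (mul_eq_zero.mp h3).resolve_left hF0
  by_cases hn : n ∈ S
  · have heq : weightedHomogeneousComponent w n h = h := by
      conv_rhs => rw [← hsum]
      rw [Finset.sum_eq_single_of_mem n hn (fun b hb hbn => hzero b hb hbn)]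
    exact heq ▸ weightedHomogeneousComponent_isWeightedHomogeneous n h
  · have : h = 0 := by
      rw [← hsum]
      exact Finset.sum_eq_zero (fun d hd => hzero d hd (by rintro rfl; exact hn hd))
    rw [this]
    exact isWeightedHomogeneous_zero ℂ w n

lemma F_wh {Q : MvPolynomial (Fin 3) ℂ} (hQ2 : Q.IsHomogeneous 2) :
    (rename Sum.inr Q : MvPolynomial VarP1P2 ℂ).IsWeightedHomogeneous bidegWt (0, 2) := by
  intro d hd
  obtain ⟨u, hud, hu⟩ := coeff_rename_ne_zero _ _ _ hd
  have hdeg : u.degree = 2 := by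
    rw [Finsupp.degree_eq_weight_one]
    exact hQ2 hu
  subst hud
  rw [weight_bidegWt]
  have h1 : ∀ i : Fin 2, (u.mapDomain (Sum.inr : Fin 3 → VarP1P2)) (Sum.inl i) = 0 := fun i =>
    Finsupp.mapDomain_notin_range _ _ (by simp)
  have h2 : ∀ j : Fin 3, (u.mapDomain (Sum.inr : Fin 3 → VarP1P2)) (Sum.inr j) = u j := fun j =>
    Finsupp.mapDomain_apply Sum.inr_injective _ _
  have h3 : (∑ j : Fin 3, u j) = 2 := by rw [← degree_eq_sum_univ, hdeg]
  simp only [h1, h2, Finset.sum_const_zero, h3]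

lemma mv_prime_X {σ' : Type*} (v : σ') : Prime (X v : MvPolynomial σ' ℂ) := by
  classical
  let e : Option {b : σ' // b ≠ v} ≃ σ' := Equiv.optionSubtypeNe v
  let Φ := (renameEquiv ℂ e.symm).trans (optionEquivLeft ℂ {b : σ' // b ≠ v})
  rw [← MulEquiv.prime_iff (p := X v) Φ]
  have : Φ (X v) = Polynomial.X := by
    show (optionEquivLeft ℂ _) ((renameEquiv ℂ e.symm) (X v)) = Polynomial.X
    rw [renameEquiv_apply, rename_X]
    have : e.symm v = none := Equiv.optionSubtypeNe_symm_self v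
    rw [this, optionEquivLeft_X_none]
  show Prime (Φ (X v))
  rw [this]
  exact Polynomial.prime_X

lemma exists_eval_zero_of_not_isUnit {g : MvPolynomial VarP1P2 ℂ} (hg : ¬ IsUnit g) :
    ∃ y : VarP1P2 → ℂ, eval y g = 0 := by
  have hne : Ideal.span {g} ≠ ⊤ := fun hcon =>
    hg (Ideal.span_singleton_eq_top.mp hcon)
  obtain ⟨J, hJmax, hJ⟩ := Ideal.exists_le_maximal _ hne
  obtain ⟨y, hy⟩ := (MvPolynomial.isMaximal_iff_eq_vanishingIdeal_singleton (I := J)).mp hJmax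
  refine ⟨y, ?_⟩
  have := hJ (Ideal.subset_span rfl)
  rw [hy] at this
  exact (MvPolynomial.mem_vanishingIdeal_singleton_iff y g).mp this

lemma squarefree_F {Q : MvPolynomial (Fin 3) ℂ}
    (hQsm : ∀ x : Fin 3 → ℂ, x ≠ 0 → eval x Q = 0 → ∃ i, eval x (pderiv i Q) ≠ 0) :
    Squarefree (rename Sum.inr Q : MvPolynomial VarP1P2 ℂ) := by
  have hQ0 : Q ≠ 0 := by
    rintro rfl
    obtain ⟨i, hi⟩ := hQsm (fun j => if j = 0 then 1 else 0)
      (by intro hcon; simpa using congrFun hcon 0) (by simp)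
    simp at hi
  have hF0 : (rename Sum.inr Q : MvPolynomial VarP1P2 ℂ) ≠ 0 := by
    intro hcon
    exact hQ0 ((map_eq_zero_iff _ (rename_injective _ Sum.inr_injective)).mp hcon)
  intro g hg
  by_contra hgu
  obtain ⟨k, hk⟩ := hg
  -- every zero of g has vanishing X-coordinates
  have hzero : ∀ y : VarP1P2 → ℂ, eval y g = 0 → ∀ j : Fin 3, y (Sum.inr j) = 0 := by
    intro y hy
    have hQy : eval (y ∘ Sum.inr) Q = 0 := by
      have : eval y (rename Sum.inr Q) = 0 := by
        rw [hk]; simp [hy]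
      rwa [eval_rename] at this
    have hd : ∀ j : Fin 3, eval (y ∘ Sum.inr) (pderiv j Q) = 0 := by
      intro j
      have h1 : pderiv (Sum.inr j) (rename Sum.inr Q : MvPolynomial VarP1P2 ℂ)
          = rename Sum.inr (pderiv j Q) := pderiv_rename Sum.inr_injective j Q
      have h2 : eval y (pderiv (Sum.inr j) (rename Sum.inr Q : MvPolynomial VarP1P2 ℂ)) = 0 := by
        rw [hk]
        simp only [pderiv_mul, map_add, map_mul, hy]
        ring
      rw [h1, eval_rename] at h2
      exact h2
    have hx0 : (y ∘ Sum.inr) = 0 := by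
      by_contra hne
      obtain ⟨i, hi⟩ := hQsm _ hne hQy
      exact hi (hd i)
    exact fun j => congrFun hx0 j
  -- X (inr j) is in the radical of (g)
  have hXdvd : ∀ j : Fin 3, ∃ nj : ℕ, g ∣ (X (Sum.inr j) : MvPolynomial VarP1P2 ℂ) ^ nj := by
    intro j
    have hmem : (X (Sum.inr j) : MvPolynomial VarP1P2 ℂ) ∈ (Ideal.span {g}).radical := by
      rw [← MvPolynomial.vanishingIdeal_zeroLocus_eq_radical (K := ℂ)]
      intro x hx
      have hxg : eval x g = 0 := hx g (Ideal.subset_span rfl)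
      simpa using hzero x hxg j
    obtain ⟨nj, hnj⟩ := hmem
    exact ⟨nj, Ideal.mem_span_singleton.mp hnj⟩
  have hXg : (X (Sum.inr 0) : MvPolynomial VarP1P2 ℂ) ∣ g := by
    obtain ⟨n0, hn0⟩ := hXdvd 0
    obtain ⟨i, _, hassoc⟩ := (dvd_prime_pow (mv_prime_X (Sum.inr 0)) n0).mp hn0
    rcases Nat.eq_zero_or_pos i with rfl | hi
    · rw [pow_zero] at hassoc
      exact absurd (associated_one_iff_isUnit.mp hassoc) hgu
    · exact (dvd_pow_self _ hi.ne').trans hassoc.symm.dvd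
  obtain ⟨n1, hn1⟩ := hXdvd 1
  have hX01 : (X (Sum.inr 0) : MvPolynomial VarP1P2 ℂ) ∣ X (Sum.inr 1) :=
    (mv_prime_X (Sum.inr 0)).dvd_of_dvd_pow (hXg.trans hn1)
  obtain ⟨c, hc⟩ := hX01
  have heval := congrArg (eval (fun v : VarP1P2 => if v = Sum.inr 1 then (1 : ℂ) else 0)) hc
  rw [eval_mul, eval_X, eval_X] at heval
  rw [if_pos rfl, if_neg (by decide), zero_mul] at heval
  exact one_ne_zero heval

end AuxiliaryLemmas

theorem image_of_cubics_through_quartic_scroll (Q : MvPolynomial (Fin 3) ℂ)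
    (hQ2 : Q.IsHomogeneous 2)
    -- B = {Q = 0} is a smooth conic
    (hQsm : ∀ x : Fin 3 → ℂ, x ≠ 0 → eval x Q = 0 → ∃ i, eval x (pderiv i Q) ≠ 0) :
    -- F : the defining equation of R = ℙ¹ × B in ℙ¹ × ℙ², of bidegree (0,2)
    segreRestriction ''
        {G : MvPolynomial VarP5 ℂ | G.IsHomogeneous 3 ∧
          -- G vanishes on R, i.e. G ∈ H⁰(I_R(3))
          ∀ (z : Fin 2 → ℂ) (x : Fin 3 → ℂ),
            eval (Sum.elim z x) (rename Sum.inr Q) = 0 →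
            eval (Sum.elim z x) (segreRestriction G) = 0} =
      (fun h => rename Sum.inr Q * h) ''
        {h : MvPolynomial VarP1P2 ℂ | h.IsWeightedHomogeneous bidegWt (3, 1)} := by
  have hQ0 : Q ≠ 0 := by
    rintro rfl
    obtain ⟨i, hi⟩ := hQsm (fun j => if j = 0 then 1 else 0)
      (by intro hcon; simpa using congrFun hcon 0) (by simp)
    simp at hi
  have hF0 : (rename Sum.inr Q : MvPolynomial VarP1P2 ℂ) ≠ 0 := by
    intro hcon
    exact hQ0 ((map_eq_zero_iff _ (rename_injective _ Sum.inr_injective)).mp hcon)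
  ext P
  constructor
  · rintro ⟨G, ⟨hG3, hGvan⟩, rfl⟩
    have hPwh : (segreRestriction G).IsWeightedHomogeneous bidegWt (3, 3) :=
      segre_isWeightedHomogeneous hG3
    have hrad : segreRestriction G ∈ (Ideal.span
        {(rename Sum.inr Q : MvPolynomial VarP1P2 ℂ)}).radical := by
      rw [← MvPolynomial.vanishingIdeal_zeroLocus_eq_radical (K := ℂ)]
      intro x hx
      have hxF : eval x (rename Sum.inr Q) = 0 := hx _ (Ideal.subset_span rfl)
      have hxel : Sum.elim (x ∘ Sum.inl) (x ∘ Sum.inr) = x :=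
        funext (fun v => by cases v <;> rfl)
      have := hGvan (x ∘ Sum.inl) (x ∘ Sum.inr) (by rwa [hxel])
      rwa [hxel] at this
    obtain ⟨n, hn⟩ := hrad
    have hdvd : (rename Sum.inr Q : MvPolynomial VarP1P2 ℂ) ∣ segreRestriction G :=
      (squarefree_F hQsm).isRadical n _ (Ideal.mem_span_singleton.mp hn)
    obtain ⟨h, hh⟩ := hdvd
    refine ⟨h, ?_, hh.symm⟩
    have hmul : ((rename Sum.inr Q : MvPolynomial VarP1P2 ℂ) * h).IsWeightedHomogeneous
        bidegWt ((0, 2) + (3, 1)) := by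
      rw [← hh]
      exact hPwh
    exact wh_cancel (F_wh hQ2) hF0 hmul
  · rintro ⟨h, hh, rfl⟩
    have hwh : ((rename Sum.inr Q : MvPolynomial VarP1P2 ℂ) * h).IsWeightedHomogeneous
        bidegWt (3, 3) := (F_wh hQ2).mul hh
    obtain ⟨G, hG3, hGeq⟩ := segre_surj_onto_bihom hwh
    refine ⟨G, ⟨hG3, fun z x hx => ?_⟩, hGeq⟩
    rw [hGeq, eval_mul, hx, zero_mul]
end

section
/- Two points of (C*)^9 (with coordinates C_{ijk} for (i,j,k) ∈ {(0,1,1),(1,2,0),(1,0,2),(2,2,0),(2,1,1),(2,0,2),(3,2,0),(3,1,1),(3,0,2)}) lie in the same orbit of the (C*)^3-action (a,b,c)·C_{ijk} = a^i b^j c^k C_{ijk} if and only if they have the same values of the six invariants (I_1, J_2, J_3, I_4, I_5, I_6). -/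
/-!
STATEMENT 12: Two points of (ℂ*)⁹ (with coordinates C_{ijk} for (i,j,k) in
{(0,1,1),(1,2,0),(1,0,2),(2,2,0),(2,1,1),(2,0,2),(3,2,0),(3,1,1),(3,0,2)})
lie in the same orbit of the (ℂ*)³-action (a,b,c)·C_{ijk} = aⁱbʲcᵏ C_{ijk}
if and only if they have the same values of the six invariants
(I₁, J₂, J₃, I₄, I₅, I₆).
-/

/-- The nine nonzero coefficients `C_{ijk}`, for
`(i,j,k) ∈ {(0,1,1),(1,2,0),(1,0,2),(2,2,0),(2,1,1),(2,0,2),(3,2,0),(3,1,1),(3,0,2)}`. -/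
structure Coeffs where
  c011 : ℂˣ
  c120 : ℂˣ
  c102 : ℂˣ
  c220 : ℂˣ
  c211 : ℂˣ
  c202 : ℂˣ
  c320 : ℂˣ
  c311 : ℂˣ
  c302 : ℂˣ

/-- The action of the torus `(ℂ*)³`: `(a,b,c) · C_{ijk} = aⁱbʲcᵏ C_{ijk}`. -/
def torusAct (a b c : ℂˣ) (C : Coeffs) : Coeffs where
  c011 := b * c * C.c011
  c120 := a * b ^ 2 * C.c120
  c102 := a * c ^ 2 * C.c102
  c220 := a ^ 2 * b ^ 2 * C.c220
  c211 := a ^ 2 * b * c * C.c211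
  c202 := a ^ 2 * c ^ 2 * C.c202
  c320 := a ^ 3 * b ^ 2 * C.c320
  c311 := a ^ 3 * b * c * C.c311
  c302 := a ^ 3 * c ^ 2 * C.c302

def I1 (C : Coeffs) : ℂˣ := C.c120 * C.c102 / (C.c211 * C.c011)
def J2 (C : Coeffs) : ℂˣ := C.c011 * C.c311 / (C.c220 * C.c102)
def J3 (C : Coeffs) : ℂˣ := C.c302 * C.c011 / (C.c211 * C.c102)
def I4 (C : Coeffs) : ℂˣ := C.c220 * C.c202 / C.c211 ^ 2
def I5 (C : Coeffs) : ℂˣ := C.c320 * C.c302 / C.c311 ^ 2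
def I6 (C : Coeffs) : ℂˣ := C.c211 ^ 3 / (C.c311 ^ 2 * C.c011)

lemma backpart (r1 r2 r3 r4 r5 r6 r7 r8 r9 : ℂ)
    (n1 : r1 ≠ 0) (n2 : r2 ≠ 0) (n3 : r3 ≠ 0) (n4 : r4 ≠ 0) (n5 : r5 ≠ 0)
    (n6 : r6 ≠ 0) (n7 : r7 ≠ 0) (n8 : r8 ≠ 0) (n9 : r9 ≠ 0)
    (e1 : r2 * r3 = r5 * r1) (e2 : r1 * r8 = r4 * r3) (e3 : r9 * r1 = r5 * r3)
    (e4 : r4 * r6 = r5 ^ 2) (e5 : r7 * r9 = r8 ^ 2) (e6 : r5 ^ 3 = r8 ^ 2 * r1) :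
    ∃ A B c : ℂ, A ≠ 0 ∧ B ≠ 0 ∧ c ≠ 0 ∧
      B * c = r1 ∧ A * B ^ 2 = r2 ∧ A * c ^ 2 = r3 ∧
      A ^ 2 * B ^ 2 = r4 ∧ A ^ 2 * B * c = r5 ∧ A ^ 2 * c ^ 2 = r6 ∧
      A ^ 3 * B ^ 2 = r7 ∧ A ^ 3 * B * c = r8 ∧ A ^ 3 * c ^ 2 = r9 := by
  have nA : r8 / r5 ≠ 0 := div_ne_zero n8 n5
  have nt : r3 * r5 / r8 ≠ 0 := div_ne_zero (mul_ne_zero n3 n5) n8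
  set c : ℂ := (r3 * r5 / r8) ^ ((2 : ℂ)⁻¹) with hcdef
  have hc2 : c ^ (2 : ℕ) = r3 * r5 / r8 := Complex.cpow_nat_inv_pow _ two_ne_zero
  have nc : c ≠ 0 := by
    intro h
    apply nt
    rw [← hc2, h]
    ring
  clear_value c
  clear hcdef
  have hc2' : c ^ 2 * r8 = r3 * r5 := by
    rw [hc2]; field_simp
  clear hc2 nt
  refine ⟨r8 / r5, r1 / c, c, nA, div_ne_zero n1 nc, nc, ?_, ?_, ?_, ?_, ?_, ?_, ?_, ?_, ?_⟩
  · field_simp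
  · field_simp
    apply mul_left_cancel₀ n8
    linear_combination (-r5*r2) * hc2' + (-r1) * e6 + (-r5^2) * e1
  · field_simp
    linear_combination hc2'
  · field_simp
    apply mul_left_cancel₀ n8
    linear_combination (-r5^2*r4) * hc2' + (r5^3) * e2 - r1 * r8 * e6
  · field_simp
    linear_combination -e6
  · field_simp
    apply mul_left_cancel₀ n4
    linear_combination r8 * r4 * hc2' - r5 * e6 - (r5*r8) * e2 - (r5^2) * e4
  · field_simp
    apply mul_left_cancel₀ n8
    linear_combination (-r5^3*r7) * hc2' - r1*r8^2 * e6 - (r5^3*r1) * e5 + (r5^3*r7) * e3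
  · field_simp
    linear_combination -e6
  · field_simp
    apply mul_left_cancel₀ n1
    linear_combination r8^2 * r1 * hc2' - (r5^3) * e3 - (r5*r3) * e6

theorem torus_orbit_iff_invariants (C C' : Coeffs) :
    (∃ a b c : ℂˣ, torusAct a b c C = C') ↔
      (I1 C = I1 C' ∧ J2 C = J2 C' ∧ J3 C = J3 C' ∧
       I4 C = I4 C' ∧ I5 C = I5 C' ∧ I6 C = I6 C') := by
  constructor
  · rintro ⟨a, b, c, rfl⟩
    refine ⟨?_, ?_, ?_, ?_, ?_, ?_⟩ <;>
    · apply Units.ext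
      simp only [I1, J2, J3, I4, I5, I6, torusAct, Units.val_div_eq_div_val, Units.val_mul,
        Units.val_pow_eq_pow_val]
      field_simp
  · obtain ⟨p1, p2, p3, p4, p5, p6, p7, p8, p9⟩ := C
    obtain ⟨q1, q2, q3, q4, q5, q6, q7, q8, q9⟩ := C'
    rintro ⟨h1, h2, h3, h4, h5, h6⟩
    have hv1 := congrArg Units.val h1
    have hv2 := congrArg Units.val h2
    have hv3 := congrArg Units.val h3
    have hv4 := congrArg Units.val h4
    have hv5 := congrArg Units.val h5
    have hv6 := congrArg Units.val h6
    simp only [I1, J2, J3, I4, I5, I6, Units.val_div_eq_div_val, Units.val_mul,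
      Units.val_pow_eq_pow_val] at hv1 hv2 hv3 hv4 hv5 hv6
    rw [div_eq_div_iff (by simp) (by simp)] at hv1 hv2 hv3 hv4 hv5 hv6
    have e1 : ((q2:ℂ)/p2) * ((q3:ℂ)/p3) = ((q5:ℂ)/p5) * ((q1:ℂ)/p1) := by
      rw [div_mul_div_comm, div_mul_div_comm,
        div_eq_div_iff (by simp) (by simp)]
      linear_combination -hv1
    have e2 : ((q1:ℂ)/p1) * ((q8:ℂ)/p8) = ((q4:ℂ)/p4) * ((q3:ℂ)/p3) := by
      rw [div_mul_div_comm, div_mul_div_comm,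
        div_eq_div_iff (by simp) (by simp)]
      linear_combination -hv2
    have e3 : ((q9:ℂ)/p9) * ((q1:ℂ)/p1) = ((q5:ℂ)/p5) * ((q3:ℂ)/p3) := by
      rw [div_mul_div_comm, div_mul_div_comm,
        div_eq_div_iff (by simp) (by simp)]
      linear_combination -hv3
    have e4 : ((q4:ℂ)/p4) * ((q6:ℂ)/p6) = ((q5:ℂ)/p5) ^ 2 := by
      rw [div_mul_div_comm, div_pow,
        div_eq_div_iff (by simp) (by simp)]
      linear_combination -hv4
    have e5 : ((q7:ℂ)/p7) * ((q9:ℂ)/p9) = ((q8:ℂ)/p8) ^ 2 := by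
      rw [div_mul_div_comm, div_pow,
        div_eq_div_iff (by simp) (by simp)]
      linear_combination -hv5
    have e6 : ((q5:ℂ)/p5) ^ 3 = ((q8:ℂ)/p8) ^ 2 * ((q1:ℂ)/p1) := by
      rw [div_pow, div_pow, div_mul_div_comm,
        div_eq_div_iff (by simp) (by simp)]
      linear_combination -hv6
    obtain ⟨A, B, c, nA, nB, nc, g1, g2, g3, g4, g5, g6, g7, g8, g9⟩ :=
      backpart _ _ _ _ _ _ _ _ _
        (div_ne_zero q1.ne_zero p1.ne_zero) (div_ne_zero q2.ne_zero p2.ne_zero)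
        (div_ne_zero q3.ne_zero p3.ne_zero) (div_ne_zero q4.ne_zero p4.ne_zero)
        (div_ne_zero q5.ne_zero p5.ne_zero) (div_ne_zero q6.ne_zero p6.ne_zero)
        (div_ne_zero q7.ne_zero p7.ne_zero) (div_ne_zero q8.ne_zero p8.ne_zero)
        (div_ne_zero q9.ne_zero p9.ne_zero) e1 e2 e3 e4 e5 e6
    refine ⟨Units.mk0 A nA, Units.mk0 B nB, Units.mk0 c nc, ?_⟩
    simp only [torusAct, Coeffs.mk.injEq]
    refine ⟨?_, ?_, ?_, ?_, ?_, ?_, ?_, ?_, ?_⟩ <;>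
      apply Units.ext <;>
      simp only [Units.val_mul, Units.val_pow_eq_pow_val, Units.val_mk0]
    · rw [mul_comm B c] at g1 ⊢
      rw [g1, div_mul_cancel₀ _ p1.ne_zero]
    · rw [g2, div_mul_cancel₀ _ p2.ne_zero]
    · rw [g3, div_mul_cancel₀ _ p3.ne_zero]
    · rw [g4, div_mul_cancel₀ _ p4.ne_zero]
    · rw [g5, div_mul_cancel₀ _ p5.ne_zero]
    · rw [g6, div_mul_cancel₀ _ p6.ne_zero]
    · rw [g7, div_mul_cancel₀ _ p7.ne_zero]
    · rw [g8, div_mul_cancel₀ _ p8.ne_zero]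
    · rw [g9, div_mul_cancel₀ _ p9.ne_zero]
end

section
/- Under the involution ι swapping Y_0 and Y_1 (which acts on coefficients by C_{ijk} ↦ C_{ikj}), the invariant J_2 = C_{011}C_{311}/(C_{220}C_{102}) transforms as ι(J_2) = I_1^{-1} J_2^{-1} I_4^{-1} I_6^{-1}, and J_3 = C_{302}C_{011}/(C_{211}C_{102}) transforms as ι(J_3) = I_1^{-1} J_3^{-1} I_5 I_6^{-1}. -/
/-- The involution `C_{ijk} ↦ C_{ikj}` (swapping `Y₀` and `Y₁`). -/
def swapY (C : Coeffs) : Coeffs where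
  c011 := C.c011
  c120 := C.c102
  c102 := C.c120
  c220 := C.c202
  c211 := C.c211
  c202 := C.c220
  c320 := C.c302
  c311 := C.c311
  c302 := C.c320

theorem swap_transforms_J2_J3 (C : Coeffs) :
    J2 (swapY C) = (I1 C)⁻¹ * (J2 C)⁻¹ * (I4 C)⁻¹ * (I6 C)⁻¹ ∧
    J3 (swapY C) = (I1 C)⁻¹ * (J3 C)⁻¹ * I5 C * (I6 C)⁻¹ := by
  constructor <;>
  · simp only [J2, J3, I1, I4, I5, I6, swapY, div_eq_mul_inv, mul_inv, inv_inv, pow_succ, pow_zero, one_mul]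
    ext
    simp only [Units.val_mul, Units.val_inv_eq_inv_val, Units.val_pow_eq_pow_val]
    field_simp
end
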